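/- (Bohr theorem for slice regular functions.) Let a : ℕ → ℍ and f : ℍ → ℍ satisfy the Bohr hypotheses. Then for every q ∈ ℍ with ‖q‖ ≤ 1/3, the family (fun n => ‖qⁿ · a n‖) is summable and ∑' n, ‖qⁿ · a n‖ < 1. -/

import Mathlib

local notation "ℍ" => Quaternion ℝ

noncomputable section

namespace BohrAux

open FormalMultilinearSeries Metric Set




def qc (z : ℂ) : ℍ := ⟨z.re, z.im, 0, 0⟩

def pc (x : ℍ) : ℂ := ⟨x.re, x.imI⟩

lemma qc_mul (z w : ℂ) : qc (z * w) = qc z * qc w := by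
  ext <;> simp [Quaternion.re_mul, Quaternion.imI_mul, Quaternion.imJ_mul,
    Quaternion.imK_mul] <;> simp [qc, Complex.mul_re, Complex.mul_im]

lemma qc_one : qc 1 = 1 := by ext <;> simp [qc, Quaternion.re_one, Quaternion.imI_one, Quaternion.imJ_one, Quaternion.imK_one]

lemma qc_pow (z : ℂ) (m : ℕ) : qc (z ^ m) = (qc z) ^ m := by
  induction m with
  | zero => simpa using qc_one
  | succ m ih => rw [pow_succ, pow_succ, qc_mul, ih]

lemma sq_norm_q (x : ℍ) : ‖x‖ ^ 2 = x.re ^ 2 + x.imI ^ 2 + x.imJ ^ 2 + x.imK ^ 2 := by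
  rw [sq, ← Quaternion.normSq_eq_norm_mul_self, Quaternion.normSq_def']

lemma norm_qc (z : ℂ) : ‖qc z‖ = ‖z‖ := by
  have h : ‖qc z‖ ^ 2 = ‖z‖ ^ 2 := by
    rw [sq_norm_q, Complex.sq_norm, Complex.normSq_apply]
    simp [qc]; ring
  calc ‖qc z‖ = √(‖qc z‖ ^ 2) := (Real.sqrt_sq (norm_nonneg _)).symm
  _ = √(‖z‖ ^ 2) := by rw [h]
  _ = ‖z‖ := Real.sqrt_sq (norm_nonneg _)

lemma pc_qc (z : ℂ) : pc (qc z) = z := by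
  apply Complex.ext <;> simp [pc, qc]

lemma pc_real (r : ℝ) : pc ((r : ℍ)) = (r : ℂ) := by
  apply Complex.ext <;> simp [pc]

lemma pc_qc_mul (z : ℂ) (x : ℍ) : pc (qc z * x) = z * pc x := by
  apply Complex.ext <;>
    simp [pc, Quaternion.re_mul, Quaternion.imI_mul] <;> simp [qc, Complex.mul_re, Complex.mul_im]

lemma norm_pc_le (x : ℍ) : ‖pc x‖ ≤ ‖x‖ := by
  have h1 : ‖pc x‖ ^ 2 ≤ ‖x‖ ^ 2 := by
    rw [Complex.sq_norm, Complex.normSq_apply, sq_norm_q]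
    simp only [pc]
    nlinarith [sq_nonneg x.imJ, sq_nonneg x.imK]
  nlinarith [norm_nonneg (pc x), norm_nonneg x]

def pcL : ℍ →L[ℝ] ℂ where
  toFun := pc
  map_add' x y := by apply Complex.ext <;> simp [pc]
  map_smul' r x := by apply Complex.ext <;> simp [pc]
  cont := by
    have h : (fun x : ℍ => pc x) = fun x : ℍ => (x.re : ℂ) + x.imI • Complex.I := by
      funext x; apply Complex.ext <;> simp [pc]
    show Continuous fun x : ℍ => pc x
    rw [h]
    exact (Complex.continuous_ofReal.comp Quaternion.continuous_re).add
      ((Quaternion.continuous_imI).smul continuous_const)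

lemma hasSum_pc {g : ℕ → ℍ} {S : ℍ} (h : HasSum g S) : HasSum (fun n => pc (g n)) (pc S) :=
  pcL.hasSum h





lemma exists_conj_slice (b : ℍ) : ∃ u : ℍ, u ≠ 0 ∧ ∃ z : ℂ, u⁻¹ * b * u = qc z := by
  by_cases hb : b.imJ = 0 ∧ b.imK = 0
  · refine ⟨1, one_ne_zero, ⟨b.re, b.imI⟩, ?_⟩
    ext <;> simp [qc, hb.1, hb.2]
  · set s : ℝ := √(b.imI ^ 2 + b.imJ ^ 2 + b.imK ^ 2) with hs
    have hs2 : b.imI ^ 2 + b.imJ ^ 2 + b.imK ^ 2 > 0 := by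
      rcases not_and_or.1 hb with h | h <;> positivity
    have hspos : 0 < s := Real.sqrt_pos.2 hs2
    have hssq : s ^ 2 = b.imI ^ 2 + b.imJ ^ 2 + b.imK ^ 2 := Real.sq_sqrt hs2.le
    set I : ℍ := ⟨0, b.imI / s, b.imJ / s, b.imK / s⟩ with hI
    have hII : I * I = -1 := by
      ext <;> simp [Quaternion.re_mul, Quaternion.imI_mul, Quaternion.imJ_mul,
        Quaternion.imK_mul, Quaternion.re_one, Quaternion.imI_one, Quaternion.imJ_one, Quaternion.imK_one] <;> simp [hI] <;> field_simp <;> nlinarith [hssq]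
    set qi : ℍ := ⟨0, 1, 0, 0⟩ with hqi
    have hqiqi : qi * qi = -1 := by
      ext <;> simp [Quaternion.re_mul, Quaternion.imI_mul, Quaternion.imJ_mul,
        Quaternion.imK_mul, Quaternion.re_one, Quaternion.imI_one, Quaternion.imJ_one, Quaternion.imK_one] <;> simp [hqi]
    set v : ℍ := 1 - qi * I with hv
    have hvne : v ≠ 0 := by
      intro h
      have h1 : (1 : ℍ) = qi * I := by rwa [hv, sub_eq_zero] at h
      have h2 : (qi * I).imJ = -(b.imK / s) := by
        simp [Quaternion.imJ_mul]; simp [hqi, hI]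
      have h3 : (qi * I).imK = b.imJ / s := by
        simp [Quaternion.imK_mul]; simp [hqi, hI]
      rw [← h1] at h2 h3
      have e2 : (0:ℝ) = -(b.imK / s) := by simpa [Quaternion.imJ_one] using h2
      have e3 : (0:ℝ) = b.imJ / s := by simpa [Quaternion.imK_one] using h3
      refine hb ⟨?_, ?_⟩
      · field_simp at e3; linarith
      · field_simp at e2; linarith
    have hkey : v * I = qi * v := by
      rw [hv]
      calc (1 - qi * I) * I = I - qi * (I * I) := by noncomm_ring
      _ = I + qi := by rw [hII]; noncomm_ring
      _ = qi * 1 - (qi * qi) * I := by rw [hqiqi]; noncomm_ring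
      _ = qi * (1 - qi * I) := by noncomm_ring
    have hbdecomp : b = (b.re : ℍ) + s • I := by
      ext <;> simp <;> simp [hI] <;> field_simp
    refine ⟨v⁻¹, inv_ne_zero hvne, ⟨b.re, s⟩, ?_⟩
    rw [inv_inv]
    have hIv : v * I * v⁻¹ = qi := by
      rw [hkey, mul_assoc, mul_inv_cancel₀ hvne, mul_one]
    have : v * b * v⁻¹ = (b.re : ℍ) + s • qi := by
      conv_lhs => rw [hbdecomp]
      rw [mul_add, add_mul]
      congr 1
      · rw [← Quaternion.coe_commutes, mul_assoc, mul_inv_cancel₀ hvne, mul_one]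
      · rw [mul_smul_comm, smul_mul_assoc, hIv]
    rw [this]
    ext <;> simp [qc] <;> simp [hqi]

lemma qconj_pow {u : ℍ} (hu : u ≠ 0) (q : ℍ) (m : ℕ) :
    (u * q * u⁻¹) ^ m = u * q ^ m * u⁻¹ := by
  induction m with
  | zero => simp [mul_inv_cancel₀ hu]
  | succ m ih =>
      rw [pow_succ, pow_succ, ih]
      rw [show u * q ^ m * u⁻¹ * (u * q * u⁻¹) = u * q ^ m * (u⁻¹ * u) * q * u⁻¹ by
        noncomm_ring]
      rw [inv_mul_cancel₀ hu, mul_one, mul_assoc u (q ^ m) q]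




lemma hasFPower (c : ℕ → ℂ) (ψ : ℂ → ℂ)
    (hsum : ∀ z : ℂ, ‖z‖ < 1 → HasSum (fun m => z ^ m * c m) (ψ z)) :
    HasFPowerSeriesOnBall ψ (ofScalars ℂ c) 0 1 := by
  constructor
  · refine ENNReal.le_of_forall_nnreal_lt fun r hr => ?_
    have hr1 : ‖((r : ℝ) : ℂ)‖ < 1 := by
      simpa [Complex.norm_of_nonneg r.2] using (by exact_mod_cast hr : (r : ℝ) < 1)
    have h := (hsum ((r : ℝ) : ℂ) hr1).summable
    have ht : Filter.Tendsto (fun m => ‖((r : ℝ) : ℂ) ^ m * c m‖) Filter.atTop (nhds 0) := by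
      simpa using (h.tendsto_atTop_zero.norm)
    obtain ⟨C, hC⟩ := ht.bddAbove_range
    refine (ofScalars ℂ c).le_radius_of_bound C fun n => ?_
    have h1 : ‖ofScalars ℂ c n‖ = ‖c n‖ := ofScalars_norm ..
    have h2 : ‖((r : ℝ) : ℂ) ^ n * c n‖ = ‖c n‖ * (r : ℝ) ^ n := by
      rw [norm_mul, norm_pow, mul_comm]
      norm_num [Complex.norm_of_nonneg r.2]
    have := hC (Set.mem_range_self n)
    rw [h1]
    rw [h2] at this
    exact this
  · exact one_pos
  · intro y hy
    have hy1 : ‖y‖ < 1 := by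
      have h := EMetric.mem_ball.1 hy
      rw [edist_eq_enorm_sub, sub_zero, ← ofReal_norm, ENNReal.ofReal_lt_one] at h
      exact_mod_cast h
    have hs := hsum y hy1
    rw [zero_add]
    have he : (fun n => (ofScalars ℂ c n) fun _ => y) = fun m => y ^ m * c m := by
      funext n
      rw [ofScalars_apply_eq, smul_eq_mul, mul_comm]
    rw [he]
    exact hs

lemma psi_zero (c : ℕ → ℂ) (ψ : ℂ → ℂ)
    (hsum : ∀ z : ℂ, ‖z‖ < 1 → HasSum (fun m => z ^ m * c m) (ψ z)) : ψ 0 = c 0 := by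
  have h1 := hsum 0 (by norm_num)
  have h2 : HasSum (fun m : ℕ => (0 : ℂ) ^ m * c m) ((0 : ℂ) ^ 0 * c 0) :=
    hasSum_single 0 (by intro m hm; simp [zero_pow hm])
  have := h1.unique h2
  simpa using this

lemma mobius_le (d w : ℂ) (hd : ‖d‖ ≤ 1) (hw : ‖w‖ ≤ 1) :
    ‖w - d‖ ≤ ‖1 - (starRingEnd ℂ) d * w‖ := by
  have hd2 : d.re ^ 2 + d.im ^ 2 ≤ 1 := by
    have := pow_le_one₀ (norm_nonneg d) hd (n := 2)
    rwa [Complex.sq_norm, Complex.normSq_apply, ← sq, ← sq] at this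
  have hw2 : w.re ^ 2 + w.im ^ 2 ≤ 1 := by
    have := pow_le_one₀ (norm_nonneg w) hw (n := 2)
    rwa [Complex.sq_norm, Complex.normSq_apply, ← sq, ← sq] at this
  have key : ‖w - d‖ ^ 2 ≤ ‖1 - (starRingEnd ℂ) d * w‖ ^ 2 := by
    rw [Complex.sq_norm, Complex.sq_norm,
      Complex.normSq_apply, Complex.normSq_apply]
    simp only [Complex.sub_re, Complex.sub_im, Complex.mul_re, Complex.mul_im,
      Complex.conj_re, Complex.conj_im, Complex.one_re, Complex.one_im]
    nlinarith [mul_nonneg (sub_nonneg.2 hd2) (sub_nonneg.2 hw2)]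
  nlinarith [norm_nonneg (w - d), norm_nonneg (1 - (starRingEnd ℂ) d * w)]

lemma wiener_base (c : ℕ → ℂ) (ψ : ℂ → ℂ)
    (hsum : ∀ z : ℂ, ‖z‖ < 1 → HasSum (fun m => z ^ m * c m) (ψ z))
    (hbd : ∀ z : ℂ, ‖z‖ < 1 → ‖ψ z‖ ≤ 1) (h0 : ‖c 0‖ < 1) :
    ‖c 1‖ ≤ 1 - ‖c 0‖ ^ 2 := by
  have hψ0 : ψ 0 = c 0 := psi_zero c ψ hsum
  set d0 : ℂ := c 0 with hd0
  set G : ℂ → ℂ := fun z => (ψ z - d0) / (1 - (starRingEnd ℂ) d0 * ψ z) with hG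
  have hden : ∀ z : ℂ, ‖z‖ < 1 → (1 - (starRingEnd ℂ) d0 * ψ z) ≠ 0 := by
    intro z hz h
    rw [sub_eq_zero] at h
    have h1 : (1 : ℝ) = ‖(starRingEnd ℂ) d0 * ψ z‖ := by rw [← h]; simp
    have h2 : ‖(starRingEnd ℂ) d0 * ψ z‖ ≤ ‖d0‖ * 1 := by
      rw [norm_mul, RCLike.norm_conj]
      exact mul_le_mul_of_nonneg_left (hbd z hz) (norm_nonneg d0)
    rw [mul_one] at h2
    linarith [h1 ▸ h2]
  have hψdiff : DifferentiableOn ℂ ψ (ball 0 1) := by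
    have h := (hasFPower c ψ hsum).differentiableOn
    refine h.mono fun z hz => ?_
    rw [EMetric.mem_ball, edist_eq_enorm_sub, sub_zero, ← ofReal_norm, ENNReal.ofReal_lt_one]
    exact mem_ball_zero_iff.1 hz
  have hGdiff : DifferentiableOn ℂ G (ball 0 1) := by
    apply DifferentiableOn.div
    · exact hψdiff.sub_const d0
    · exact (differentiableOn_const 1).sub ((differentiableOn_const _).mul hψdiff)
    · intro z hz; exact hden z (mem_ball_zero_iff.1 hz)
  have hGbd : ∀ z ∈ ball (0 : ℂ) 1, ‖G z‖ ≤ 1 := by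
    intro z hz
    have hz1 := mem_ball_zero_iff.1 hz
    rw [hG]
    simp only
    rw [norm_div]
    rw [div_le_one (norm_pos_iff.2 (hden z hz1))]
    exact mobius_le d0 (ψ z) h0.le (hbd z hz1)
  have hG0 : G 0 = 0 := by rw [hG]; simp [hψ0, ← hd0]
  -- derivative of ψ at 0
  have hψd : HasDerivAt ψ (c 1) 0 := by
    have hFat := (hasFPower c ψ hsum).hasFPowerSeriesAt
    have h1 := hFat.differentiableAt.hasDerivAt
    have h2 : deriv ψ 0 = (ofScalars ℂ c).coeff 1 := hFat.deriv
    have h3 : (ofScalars ℂ c).coeff 1 = c 1 := by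
      calc (ofScalars ℂ c).coeff 1 = ofScalars ℂ c 1 (fun _ => 1) := rfl
      _ = c 1 • (1 : ℂ) ^ 1 := ofScalars_apply_eq ..
      _ = c 1 := by simp
    rwa [h2, h3] at h1
  set D0 : ℂ := 1 - (starRingEnd ℂ) d0 * d0 with hD0def
  have hD0val : D0 = ((1 - ‖d0‖ ^ 2 : ℝ) : ℂ) := by
    rw [hD0def, ← Complex.normSq_eq_conj_mul_self]
    push_cast
    rw [Complex.normSq_eq_norm_sq]
    push_cast
    ring
  have hpos : (0 : ℝ) < 1 - ‖d0‖ ^ 2 := by nlinarith [norm_nonneg d0]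
  have hD0ne : D0 ≠ 0 := by
    rw [hD0val]
    exact_mod_cast hpos.ne'
  have hN : HasDerivAt (fun z => ψ z - d0) (c 1) 0 := hψd.sub_const d0
  have hDen : HasDerivAt (fun z => 1 - (starRingEnd ℂ) d0 * ψ z)
      (-((starRingEnd ℂ) d0 * c 1)) 0 := (hψd.const_mul ((starRingEnd ℂ) d0)).const_sub 1
  have hden0 : (1 - (starRingEnd ℂ) d0 * ψ 0) ≠ 0 := hden 0 (by norm_num)
  have hGd : HasDerivAt G ((c 1 * (1 - (starRingEnd ℂ) d0 * ψ 0) -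
      (ψ 0 - d0) * (-((starRingEnd ℂ) d0 * c 1))) / (1 - (starRingEnd ℂ) d0 * ψ 0) ^ 2) 0 :=
    hN.div hDen hden0
  have hval : (c 1 * (1 - (starRingEnd ℂ) d0 * ψ 0) -
      (ψ 0 - d0) * (-((starRingEnd ℂ) d0 * c 1))) / (1 - (starRingEnd ℂ) d0 * ψ 0) ^ 2
      = c 1 / D0 := by
    rw [hψ0, ← hD0def, sub_self, zero_mul, sub_zero, sq]
    rw [mul_comm D0 D0, ← div_div, mul_div_assoc, div_self hD0ne, mul_one]
  rw [hval] at hGd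
  have hderiv : deriv G 0 = c 1 / D0 := hGd.deriv
  have hschwarz : ∀ R : ℝ, 1 < R → ‖deriv G 0‖ ≤ R := by
    intro R hR
    have hmaps : Set.MapsTo G (ball (0 : ℂ) 1) (ball (G 0) R) := by
      intro z hz
      rw [mem_ball, hG0, dist_zero_right]
      exact lt_of_le_of_lt (hGbd z hz) hR
    have := Complex.norm_deriv_le_div_of_mapsTo_ball hGdiff (hmaps.mono_right ball_subset_closedBall) one_pos
    simpa using this
  have hle1 : ‖deriv G 0‖ ≤ 1 := by
    by_contra hcon
    push_neg at hcon
    have := hschwarz ((1 + ‖deriv G 0‖) / 2) (by linarith)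
    linarith
  rw [hderiv, norm_div, hD0val] at hle1
  have hnormD0 : ‖((1 - ‖d0‖ ^ 2 : ℝ) : ℂ)‖ = 1 - ‖d0‖ ^ 2 := by
    rw [Complex.norm_real, Real.norm_eq_abs, abs_of_pos hpos]
  rw [hnormD0, div_le_one hpos] at hle1
  simpa [hd0] using hle1

lemma wiener_coeff (c : ℕ → ℂ) (ψ : ℂ → ℂ)
    (hsum : ∀ z : ℂ, ‖z‖ < 1 → HasSum (fun m => z ^ m * c m) (ψ z))
    (hbd : ∀ z : ℂ, ‖z‖ < 1 → ‖ψ z‖ ≤ 1) (h0 : ‖c 0‖ < 1) :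
    ∀ n : ℕ, 1 ≤ n → ‖c n‖ ≤ 1 - ‖c 0‖ ^ 2 := by
  intro n hn
  have hn0 : n ≠ 0 := by omega
  have hnC : ((n : ℂ)) ≠ 0 := by exact_mod_cast hn0
  set ζ : ℂ := Complex.exp (2 * Real.pi * Complex.I / n) with hζdef
  have hζ : IsPrimitiveRoot ζ n := Complex.isPrimitiveRoot_exp n hn0
  have hζnorm : ‖ζ‖ = 1 := by
    have h1 : ‖ζ‖ ^ n = 1 := by rw [← norm_pow, hζ.pow_eq_one, norm_one]
    rcases lt_trichotomy ‖ζ‖ 1 with h | h | h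
    · exfalso
      have := pow_lt_one₀ (norm_nonneg ζ) h hn0
      rw [h1] at this; exact lt_irrefl _ this
    · exact h
    · exfalso
      have := one_lt_pow₀ h hn0
      rw [h1] at this; exact lt_irrefl _ this
  set d : ℕ → ℂ := fun j => c (n * j) with hd
  set χ : ℂ → ℂ := fun w => ∑' j, w ^ j * d j with hχ
  have key : ∀ w : ℂ, ‖w‖ < 1 → HasSum (fun j => w ^ j * d j) (χ w) ∧ ‖χ w‖ ≤ 1 := by
    intro w hw
    obtain ⟨z, hz⟩ := IsAlgClosed.exists_pow_nat_eq w (by omega : 0 < n)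
    have hznorm : ‖z‖ < 1 := by
      by_contra h
      push_neg at h
      have h2 : (1 : ℝ) ≤ ‖z‖ ^ n := one_le_pow₀ h
      rw [← hz, norm_pow] at hw
      linarith
    have hterm : ∀ k ∈ Finset.range n, HasSum (fun m => (ζ ^ k * z) ^ m * c m) (ψ (ζ ^ k * z)) := by
      intro k _
      apply hsum
      rw [norm_mul, norm_pow, hζnorm, one_pow, one_mul]
      exact hznorm
    have hsumk := hasSum_sum hterm
    set T : ℂ := ∑ k ∈ Finset.range n, ψ (ζ ^ k * z) with hT
    have hF : (fun m => ∑ k ∈ Finset.range n, (ζ ^ k * z) ^ m * c m)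
        = fun m => (if n ∣ m then (n : ℂ) else 0) * (z ^ m * c m) := by
      funext m
      have h1 : ∀ k, (ζ ^ k * z) ^ m * c m = (ζ ^ m) ^ k * (z ^ m * c m) := by
        intro k
        rw [mul_pow, pow_right_comm, mul_assoc]
      rw [Finset.sum_congr rfl fun k _ => h1 k, ← Finset.sum_mul]
      congr 1
      by_cases hdvd : n ∣ m
      · rw [if_pos hdvd]
        have hone : ζ ^ m = 1 := (hζ.pow_eq_one_iff_dvd m).2 hdvd
        simp [hone]
      · rw [if_neg hdvd]
        have hne1 : ζ ^ m ≠ 1 := fun h => hdvd ((hζ.pow_eq_one_iff_dvd m).1 h)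
        rw [geom_sum_eq hne1]
        have hpow : (ζ ^ m) ^ n = 1 := by
          rw [← pow_mul, mul_comm, pow_mul, hζ.pow_eq_one, one_pow]
        rw [hpow, sub_self, zero_div]
    rw [hF] at hsumk
    have hinj : Function.Injective (fun j : ℕ => n * j) := fun a b h => by
      exact Nat.eq_of_mul_eq_mul_left (by omega) h
    have hvanish : ∀ m ∉ Set.range (fun j : ℕ => n * j),
        (if n ∣ m then (n : ℂ) else 0) * (z ^ m * c m) = 0 := by
      intro m hm
      rw [if_neg, zero_mul]
      rintro ⟨j, hj⟩
      exact hm ⟨j, hj.symm⟩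
    have hre := (hinj.hasSum_iff hvanish).2 hsumk
    have hcomp : ((fun m => (if n ∣ m then (n : ℂ) else 0) * (z ^ m * c m)) ∘ fun j => n * j)
        = fun j => (n : ℂ) * (w ^ j * d j) := by
      funext j
      simp only [Function.comp]
      rw [if_pos ⟨j, rfl⟩]
      have : z ^ (n * j) = w ^ j := by rw [pow_mul, hz]
      rw [this]
    rw [hcomp] at hre
    have hfin : HasSum (fun j => w ^ j * d j) ((n : ℂ)⁻¹ * T) := by
      have h2 := hre.mul_left (n : ℂ)⁻¹
      simpa [inv_mul_cancel_left₀ hnC] using h2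
    have hTbd : ‖T‖ ≤ (n : ℝ) := by
      rw [hT]
      calc ‖∑ k ∈ Finset.range n, ψ (ζ ^ k * z)‖ ≤ ∑ k ∈ Finset.range n, ‖ψ (ζ ^ k * z)‖ :=
            norm_sum_le _ _
      _ ≤ ∑ _k ∈ Finset.range n, (1 : ℝ) := by
            refine Finset.sum_le_sum fun k _ => ?_
            apply hbd
            rw [norm_mul, norm_pow, hζnorm, one_pow, one_mul]
            exact hznorm
      _ = (n : ℝ) := by simp
    have hχw : χ w = (n : ℂ)⁻¹ * T := hfin.tsum_eq
    refine ⟨by rw [hχ]; simpa [← hχw] using hfin, ?_⟩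
    rw [hχw, norm_mul, norm_inv]
    have hnpos : (0 : ℝ) < n := by exact_mod_cast Nat.pos_of_ne_zero hn0
    have : ‖(n : ℂ)‖ = (n : ℝ) := by simp
    rw [this]
    rw [inv_mul_le_iff₀ hnpos, mul_one]
    exact hTbd
  have hb := wiener_base d χ (fun w hw => (key w hw).1) (fun w hw => (key w hw).2)
    (by simpa [hd] using h0)
  have h1 : d 1 = c n := by rw [hd]; norm_num
  have h2 : d 0 = c 0 := by rw [hd]; norm_num
  rw [h1, h2] at hb
  exact hb

lemma conj_term {u : ℍ} (hu : u ≠ 0) (X x w : ℍ) :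
    u⁻¹ * (u * X * u⁻¹ * x * (w * u)) = X * (u⁻¹ * (x * w) * u) := by
  calc u⁻¹ * (u * X * u⁻¹ * x * (w * u))
      = (u⁻¹ * u) * (X * u⁻¹ * x * w * u) := by noncomm_ring
  _ = X * u⁻¹ * x * w * u := by rw [inv_mul_cancel₀ hu, one_mul]
  _ = X * (u⁻¹ * (x * w) * u) := by noncomm_ring


end BohrAux

open BohrAux

def BohrHypotheses (f : ℍ → ℍ) (a : ℕ → ℍ) : Prop :=
  ContinuousOn f {q : ℍ | ‖q‖ ≤ 1} ∧
  (∀ q : ℍ, ‖q‖ < 1 → HasSum (fun n => q ^ n * a n) (f q)) ∧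
  (∀ q : ℍ, ‖q‖ ≤ 1 → ‖f q‖ < 1)

lemma bohr_coeff_bound (a : ℕ → ℍ) (f : ℍ → ℍ) (hBohr : BohrHypotheses f a) :
    ‖a 0‖ < 1 ∧ ∀ n : ℕ, 1 ≤ n → ‖a n‖ ≤ 1 - ‖a 0‖ ^ 2 := by
  obtain ⟨-, hsum, hlt⟩ := hBohr
  have hf0 : f 0 = a 0 := by
    have h1 := hsum 0 (by norm_num)
    have h2 : HasSum (fun n : ℕ => (0 : ℍ) ^ n * a n) ((0 : ℍ) ^ 0 * a 0) :=
      hasSum_single 0 (by intro m hm; simp [zero_pow hm])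
    have := h1.unique h2
    simpa using this
  have ha0 : ‖a 0‖ < 1 := by
    rw [← hf0]
    exact hlt 0 (by norm_num)
  refine ⟨ha0, fun n hn => ?_⟩
  -- unit quaternion w making `a 0 * w` a nonnegative real
  obtain ⟨w, hwnorm, hw0⟩ : ∃ w : ℍ, ‖w‖ = 1 ∧ a 0 * w = ((‖a 0‖ : ℝ) : ℍ) := by
    by_cases h : a 0 = 0
    · exact ⟨1, norm_one, by simp [h]⟩
    · refine ⟨star (a 0) * (((‖a 0‖)⁻¹ : ℝ) : ℍ), ?_, ?_⟩
      · rw [norm_mul, norm_star, Quaternion.norm_coe, Real.norm_eq_abs,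
          abs_of_nonneg (inv_nonneg.2 (norm_nonneg _))]
        field_simp
      · rw [← mul_assoc, Quaternion.self_mul_star]
        rw [Quaternion.normSq_eq_norm_mul_self]
        rw [← Quaternion.coe_mul]
        congr 1
        field_simp
  obtain ⟨u, hu, z0, hslice⟩ := exists_conj_slice (a n * w)
  set b : ℕ → ℍ := fun m => u⁻¹ * (a m * w) * u with hb
  set c : ℕ → ℂ := fun m => pc (b m) with hc
  set ψ : ℂ → ℂ := fun z => pc (u⁻¹ * (f (u * qc z * u⁻¹) * (w * u))) with hψ
  have hnormconj : ∀ z : ℂ, ‖u * qc z * u⁻¹‖ = ‖z‖ := by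
    intro z
    rw [norm_mul, norm_mul, norm_inv, norm_qc]
    have : ‖u‖ ≠ 0 := norm_ne_zero_iff.2 hu
    field_simp
  have hsum' : ∀ z : ℂ, ‖z‖ < 1 → HasSum (fun m => z ^ m * c m) (ψ z) := by
    intro z hz
    have hq : ‖u * qc z * u⁻¹‖ < 1 := by rw [hnormconj]; exact hz
    have h1 := hsum _ hq
    have h2 := (h1.mul_right (w * u)).mul_left u⁻¹
    have h3 : (fun m => u⁻¹ * ((u * qc z * u⁻¹) ^ m * a m * (w * u)))
        = fun m => qc (z ^ m) * b m := by
      funext m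
      rw [qconj_pow hu, ← qc_pow]
      exact conj_term hu (qc (z ^ m)) (a m) w
    rw [h3] at h2
    have h4 := hasSum_pc h2
    have h5 : (fun m => pc (qc (z ^ m) * b m)) = fun m => z ^ m * c m := by
      funext m
      rw [pc_qc_mul]
    rw [h5] at h4
    show HasSum (fun m => z ^ m * c m) (pc (u⁻¹ * (f (u * qc z * u⁻¹) * (w * u))))
    exact h4
  have hbd' : ∀ z : ℂ, ‖z‖ < 1 → ‖ψ z‖ ≤ 1 := by
    intro z hz
    have h1 : ‖ψ z‖ ≤ ‖u⁻¹ * (f (u * qc z * u⁻¹) * (w * u))‖ := norm_pc_le _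
    have h2 : ‖u⁻¹ * (f (u * qc z * u⁻¹) * (w * u))‖ = ‖f (u * qc z * u⁻¹)‖ := by
      rw [norm_mul, norm_mul, norm_mul, norm_inv, hwnorm]
      have : ‖u‖ ≠ 0 := norm_ne_zero_iff.2 hu
      field_simp
    have h3 : ‖f (u * qc z * u⁻¹)‖ < 1 := hlt _ (by rw [hnormconj]; exact hz.le)
    calc ‖ψ z‖ ≤ _ := h1
    _ = _ := h2
    _ ≤ 1 := h3.le
  have hb0 : b 0 = ((‖a 0‖ : ℝ) : ℍ) := by
    rw [hb]
    simp only
    rw [hw0, ← Quaternion.coe_commutes, mul_assoc, inv_mul_cancel₀ hu, mul_one]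
  have hc0 : c 0 = ((‖a 0‖ : ℝ) : ℂ) := by rw [hc]; simp only; rw [hb0, pc_real]
  have hc0norm : ‖c 0‖ = ‖a 0‖ := by
    rw [hc0, Complex.norm_real, Real.norm_eq_abs, abs_of_nonneg (norm_nonneg _)]
  have hcn : ‖c n‖ = ‖a n‖ := by
    have h1 : b n = qc z0 := hslice
    have h2 : c n = z0 := by rw [hc]; simp only; rw [h1, pc_qc]
    have h3 : ‖qc z0‖ = ‖a n‖ := by
      rw [← h1, hb]
      simp only
      rw [norm_mul, norm_mul, norm_inv, norm_mul, hwnorm]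
      have : ‖u‖ ≠ 0 := norm_ne_zero_iff.2 hu
      field_simp
    rw [h2, ← norm_qc, h3]
  have := wiener_coeff c ψ hsum' hbd' (by rw [hc0norm]; exact ha0) n hn
  rwa [hcn, hc0norm] at this

theorem bohr_theorem
    (a : ℕ → ℍ) (f : ℍ → ℍ)
    (hBohr : BohrHypotheses f a) :
    ∀ q : ℍ, ‖q‖ ≤ 1 / 3 →
      Summable (fun n => ‖q ^ n * a n‖) ∧ ∑' n, ‖q ^ n * a n‖ < 1 := by
  intro q hq
  obtain ⟨ha0, hkey⟩ := bohr_coeff_bound a f hBohr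
  set C : ℝ := ‖a 0‖ with hC
  have hC0 : 0 ≤ C := norm_nonneg _
  have hterm : ∀ n : ℕ, 1 ≤ n → ‖q ^ n * a n‖ ≤ (1 - C ^ 2) * (1 / 3) ^ n := by
    intro n hn
    rw [norm_mul, norm_pow]
    calc ‖q‖ ^ n * ‖a n‖ ≤ (1 / 3) ^ n * (1 - C ^ 2) := by
          apply mul_le_mul
          · exact pow_le_pow_left₀ (norm_nonneg q) hq n
          · exact hkey n hn
          · exact norm_nonneg _
          · positivity
    _ = (1 - C ^ 2) * (1 / 3) ^ n := mul_comm _ _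
  have hterm' : ∀ n : ℕ, ‖q ^ n * a n‖ ≤ (1 / 3 : ℝ) ^ n := by
    intro n
    rcases Nat.eq_zero_or_pos n with rfl | hn
    · simpa using ha0.le
    · calc ‖q ^ n * a n‖ ≤ (1 - C ^ 2) * (1 / 3) ^ n := hterm n hn
      _ ≤ 1 * (1 / 3) ^ n := by
          apply mul_le_mul_of_nonneg_right _ (by positivity)
          nlinarith
      _ = (1 / 3) ^ n := one_mul _
  have hgeo : Summable fun n : ℕ => (1 / 3 : ℝ) ^ n :=
    summable_geometric_of_lt_one (by norm_num) (by norm_num)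
  have hsummable : Summable (fun n => ‖q ^ n * a n‖) :=
    Summable.of_nonneg_of_le (fun n => norm_nonneg _) hterm' hgeo
  refine ⟨hsummable, ?_⟩
  have htail_summable : Summable (fun n => ‖q ^ (n + 1) * a (n + 1)‖) := by
    exact (summable_nat_add_iff 1).2 hsummable
  have hsplit : ∑' n, ‖q ^ n * a n‖ = ‖q ^ 0 * a 0‖ + ∑' n, ‖q ^ (n + 1) * a (n + 1)‖ :=
    hsummable.tsum_eq_zero_add
  have hgeo' : Summable fun n : ℕ => (1 - C ^ 2) * (1 / 3 : ℝ) ^ (n + 1) := by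
    apply Summable.mul_left
    exact (summable_nat_add_iff 1).2 hgeo
  have htail : ∑' n, ‖q ^ (n + 1) * a (n + 1)‖ ≤ ∑' n : ℕ, (1 - C ^ 2) * (1 / 3 : ℝ) ^ (n + 1) := by
    apply Summable.tsum_le_tsum _ htail_summable hgeo'
    intro n
    exact hterm (n + 1) (by omega)
  have hgeoval : ∑' n : ℕ, (1 - C ^ 2) * (1 / 3 : ℝ) ^ (n + 1) = (1 - C ^ 2) * (1 / 2) := by
    rw [tsum_mul_left]
    congr 1
    have h1 : ∑' n : ℕ, (1 / 3 : ℝ) ^ (n + 1) = (1 / 3) * ∑' n : ℕ, (1 / 3 : ℝ) ^ n := by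
      rw [← tsum_mul_left]
      congr 1
      funext n
      rw [pow_succ]
      ring
    rw [h1, tsum_geometric_of_lt_one (by norm_num) (by norm_num)]
    norm_num
  have h00 : ‖q ^ 0 * a 0‖ = C := by simp [hC]
  rw [hsplit, h00]
  have : ∑' n, ‖q ^ (n + 1) * a (n + 1)‖ ≤ (1 - C ^ 2) * (1 / 2) := by
    rw [← hgeoval]; exact htail
  nlinarith
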